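/- In the rank-one update setting, under the generic assumptions and with ρ > 0, the interleaving of eigenvalues is strict: λ_i < λ̃_i for every i ∈ {1,…,n} and λ̃_i < λ_{i+1} for every i ∈ {1,…,n−1}; in particular the eigenvalues λ̃_1 < … < λ̃_n of L̃ are pairwise distinct, no λ̃_j equals any λ_i, and λ̃_n ≤ λ_n + ρ ‖z‖₂². -/

import Mathlib

open Matrix Finset

theorem diag_rank_one_det' {m : ℕ} (d : Fin m → ℝ) (hd : ∀ i, d i ≠ 0) (ρ : ℝ) (z : Fin m → ℝ) :
    det (Matrix.diagonal d + ρ • vecMulVec z z)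
      = ∏ i, d i + ρ * ∑ i, z i ^ 2 * ∏ k ∈ univ.erase i, d k := by
  have h1 : ρ • vecMulVec z z = replicateCol Unit (ρ • z) * replicateRow Unit z := by
    ext i j; simp [vecMulVec, Matrix.mul_apply, mul_assoc]
  have hA : IsUnit (Matrix.diagonal d).det := by
    rw [det_diagonal]
    exact (Finset.prod_ne_zero_iff.mpr (fun i _ => hd i)).isUnit
  rw [h1, det_add_replicateCol_mul_replicateRow hA]
  rw [Matrix.inv_diagonal, det_diagonal, det_unique]
  simp only [Matrix.add_apply, Matrix.one_apply_eq, Matrix.mul_apply, Matrix.replicateRow_apply,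
    Matrix.replicateCol_apply, Matrix.diagonal_apply, Pi.smul_apply, smul_eq_mul, Finset.sum_mul,
    Finset.mul_sum, mul_ite, mul_zero, Finset.sum_ite_eq', Finset.mem_univ, if_true]
  have hinv : Ring.inverse d = fun i => (d i)⁻¹ := by
    have hu : Ring.inverse ((⟨d, fun i => (d i)⁻¹,
        by funext i; exact mul_inv_cancel₀ (hd i),
        by funext i; exact inv_mul_cancel₀ (hd i)⟩ : (Fin m → ℝ)ˣ) : Fin m → ℝ)
        = fun i => (d i)⁻¹ := Ring.inverse_unit _
    exact hu
  rw [mul_add, mul_one, Finset.mul_sum]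
  congr 1
  refine Finset.sum_congr rfl fun i _ => ?_
  rw [← Finset.mul_prod_erase univ d (mem_univ i), hinv]
  field_simp [hd i]

theorem det_similar' {m : ℕ} (L U tU : Matrix (Fin m) (Fin m) ℝ)
    (lam tlam : Fin m → ℝ)
    (hU : Uᵀ * U = 1)
    (hLd : L = U * Matrix.diagonal lam * Uᵀ)
    (ρ : ℝ) (v z : Fin m → ℝ) (hz_def : z = Uᵀ.mulVec v)
    (htU : tUᵀ * tU = 1)
    (htLd : L + ρ • vecMulVec v v = tU * Matrix.diagonal tlam * tUᵀ)
    (t : ℝ) :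
    ∏ j, (tlam j - t) = det (Matrix.diagonal (fun i => lam i - t) + ρ • vecMulVec z z) := by
  have hU' : U * Uᵀ = 1 := mul_eq_one_comm.mp hU
  have htU' : tU * tUᵀ = 1 := mul_eq_one_comm.mp htU
  have hdetU : det U * det Uᵀ = 1 := by rw [← det_mul, hU', det_one]
  have hdettU : det tU * det tUᵀ = 1 := by rw [← det_mul, htU', det_one]
  have hv : U.mulVec z = v := by
    rw [hz_def, Matrix.mulVec_mulVec, hU', Matrix.one_mulVec]
  have hvv : vecMulVec v v = U * vecMulVec z z * Uᵀ := by
    rw [vecMulVec_eq Unit, vecMulVec_eq Unit, ← hv, Matrix.replicateCol_mulVec, Matrix.replicateRow_mulVec,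
      Matrix.transpose_mul, Matrix.transpose_replicateCol]
    simp only [Matrix.mul_assoc]
  have hone : (t • (1 : Matrix (Fin m) (Fin m) ℝ)) = U * (t • 1) * Uᵀ := by
    rw [Matrix.mul_smul, Matrix.mul_one, Matrix.smul_mul, hU']
  have honet : (t • (1 : Matrix (Fin m) (Fin m) ℝ)) = tU * (t • 1) * tUᵀ := by
    rw [Matrix.mul_smul, Matrix.mul_one, Matrix.smul_mul, htU']
  have key : tU * (Matrix.diagonal tlam - t • 1) * tUᵀ
      = U * (Matrix.diagonal lam + ρ • vecMulVec z z - t • 1) * Uᵀ := by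
    rw [Matrix.mul_sub, Matrix.sub_mul, ← honet, ← htLd, hLd]
    rw [Matrix.mul_sub, Matrix.sub_mul, ← hone, Matrix.mul_add, Matrix.add_mul,
      Matrix.mul_smul, Matrix.smul_mul, ← hvv]
  have hd2 : Matrix.diagonal lam + ρ • vecMulVec z z - t • 1
      = Matrix.diagonal (fun i => lam i - t) + ρ • vecMulVec z z := by
    rw [Matrix.smul_one_eq_diagonal]
    ext i j
    by_cases h : i = j <;> simp [Matrix.diagonal, h] <;> ring
  have e1 : det (tU * (Matrix.diagonal tlam - t • 1) * tUᵀ)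
      = det (Matrix.diagonal tlam - t • 1) := by
    rw [det_mul, det_mul]
    linear_combination (Matrix.diagonal tlam - t • 1).det * hdettU
  have e2 : det (U * (Matrix.diagonal lam + ρ • vecMulVec z z - t • 1) * Uᵀ)
      = det (Matrix.diagonal lam + ρ • vecMulVec z z - t • 1) := by
    rw [det_mul, det_mul]
    linear_combination (Matrix.diagonal lam + ρ • vecMulVec z z - t • 1).det * hdetU
  have e3 : Matrix.diagonal tlam - t • 1 = Matrix.diagonal (fun j => tlam j - t) := by
    rw [Matrix.smul_one_eq_diagonal, Matrix.diagonal_sub]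
  calc ∏ j, (tlam j - t) = det (Matrix.diagonal (fun j => tlam j - t)) := (det_diagonal).symm
    _ = det (tU * (Matrix.diagonal tlam - t • 1) * tUᵀ) := by rw [e1, e3]
    _ = _ := by rw [key, e2, hd2]

/-- Rank-one update setting, generic assumptions (`λ` pairwise distinct, `z_i ≠ 0`
for all `i`), `ρ > 0`: the interleaving is strict, `λ_i < λ̃_i` and `λ̃_i < λ_{i+1}`;
in particular the eigenvalues of `L̃` are pairwise distinct, no `λ̃_j` equals any
`λ_i`, and `λ̃_n ≤ λ_n + ρ ‖z‖₂²`. -/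
theorem rank_one_update_strict_interleaving
    {n : ℕ} (L U tU : Matrix (Fin (n + 1)) (Fin (n + 1)) ℝ)
    (lam tlam : Fin (n + 1) → ℝ)
    (hU : Uᵀ * U = 1)
    (hLd : L = U * Matrix.diagonal lam * Uᵀ)
    (hlam : StrictMono lam)
    (ρ : ℝ) (hρ : 0 < ρ) (v : Fin (n + 1) → ℝ)
    (z : Fin (n + 1) → ℝ) (hz_def : z = Uᵀ.mulVec v)
    (hz : ∀ i, z i ≠ 0)
    (htU : tUᵀ * tU = 1)
    (htLd : L + ρ • vecMulVec v v = tU * Matrix.diagonal tlam * tUᵀ)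
    (htmono : Monotone tlam) :
    (∀ j : Fin (n + 1), lam j < tlam j) ∧
    (∀ i : Fin n, tlam i.castSucc < lam i.succ) ∧
    (∀ j j' : Fin (n + 1), j ≠ j' → tlam j ≠ tlam j') ∧
    (∀ j i : Fin (n + 1), tlam j ≠ lam i) ∧
    tlam (Fin.last n) ≤ lam (Fin.last n) + ρ * ∑ i, z i ^ 2 := by
  set P : ℝ → ℝ := fun t =>
    ∏ i, (lam i - t) + ρ * ∑ i, z i ^ 2 * ∏ k ∈ univ.erase i, (lam k - t) with hP
  -- the key polynomial identity
  have keyF : ∀ t : ℝ, ∏ j, (tlam j - t) = P t := by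
    have hEqOn : Set.EqOn (fun t => ∏ j, (tlam j - t)) P ((Set.range lam)ᶜ) := by
      intro t ht
      have hd : ∀ i, lam i - t ≠ 0 := fun i h => ht ⟨i, by linarith [sub_eq_zero.mp h]⟩
      exact (det_similar' L U tU lam tlam hU hLd ρ v z hz_def htU htLd t).trans
        (diag_rank_one_det' (fun i => lam i - t) hd ρ z)
    have hdense : Dense ((Set.range lam)ᶜ) :=
      Set.Countable.dense_compl ℝ ((Set.finite_range lam).countable)
    have hFc : Continuous fun t : ℝ => ∏ j, (tlam j - t) :=
      continuous_finset_prod _ fun j _ => continuous_const.sub continuous_id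
    have hPc : Continuous P :=
      (continuous_finset_prod _ fun i _ => continuous_const.sub continuous_id).add
        (continuous_const.mul (continuous_finset_sum _ fun i _ =>
          continuous_const.mul
            (continuous_finset_prod _ fun k _ => continuous_const.sub continuous_id)))
    exact fun t => congrFun (Continuous.ext_on hdense hFc hPc hEqOn) t
  have hPc : Continuous P :=
    (continuous_finset_prod _ fun i _ => continuous_const.sub continuous_id).add
      (continuous_const.mul (continuous_finset_sum _ fun i _ =>
        continuous_const.mul
          (continuous_finset_prod _ fun k _ => continuous_const.sub continuous_id)))
  set T : ℝ := lam (Fin.last n) + ρ * ∑ i, z i ^ 2 with hT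
  have hzsq : 0 < ∑ i, z i ^ 2 :=
    Finset.sum_pos (fun i _ => lt_of_le_of_ne (sq_nonneg _) (Ne.symm (pow_ne_zero 2 (hz i))))
      ⟨0, mem_univ 0⟩
  have hTgt : ∀ i, lam i < T :=
    fun i => lt_of_le_of_lt (hlam.monotone (Fin.le_last i))
      (lt_add_of_pos_right _ (mul_pos hρ hzsq))
  -- value of P at the lam i
  have hPlam : ∀ i, P (lam i) = ρ * (z i ^ 2 * ∏ k ∈ univ.erase i, (lam k - lam i)) := by
    intro i
    rw [hP]
    have h1 : ∏ k, (lam k - lam i) = 0 :=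
      Finset.prod_eq_zero (mem_univ i) (sub_self _)
    have h2 : ∑ j, z j ^ 2 * ∏ k ∈ univ.erase j, (lam k - lam i)
        = z i ^ 2 * ∏ k ∈ univ.erase i, (lam k - lam i) := by
      refine Finset.sum_eq_single i (fun j _ hj => ?_) (fun h => absurd (mem_univ i) h)
      have : ∏ k ∈ univ.erase j, (lam k - lam i) = 0 :=
        Finset.prod_eq_zero (Finset.mem_erase.mpr ⟨Ne.symm hj, mem_univ i⟩) (sub_self _)
      rw [this, mul_zero]
    simp only [h1, h2, zero_add]
  -- sign of P at the lam i
  have hsign : ∀ i : Fin (n + 1), 0 < (-1 : ℝ) ^ (i : ℕ) * P (lam i) := by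
    intro i
    have hsplit : univ.erase i = (Finset.Ioi i).disjUnion (Finset.Iio i)
        (Finset.disjoint_Ioi_Iio i) := by
      ext k
      simp only [Finset.mem_erase, Finset.mem_univ, and_true, Finset.mem_disjUnion,
        Finset.mem_Ioi, Finset.mem_Iio]
      constructor
      · intro h; exact (lt_or_gt_of_ne h).symm.imp (fun h' => h') (fun h' => h')
      · rintro (h | h)
        · exact (ne_of_gt h)
        · exact (ne_of_lt h)
    set A : ℝ := ∏ k ∈ Finset.Ioi i, (lam k - lam i) with hA
    set B' : ℝ := ∏ k ∈ Finset.Iio i, (lam i - lam k) with hB'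
    have hApos : 0 < A :=
      Finset.prod_pos fun k hk => sub_pos.mpr (hlam (Finset.mem_Ioi.mp hk))
    have hB'pos : 0 < B' :=
      Finset.prod_pos fun k hk => sub_pos.mpr (hlam (Finset.mem_Iio.mp hk))
    have hB : ∏ k ∈ Finset.Iio i, (lam k - lam i) = (-1 : ℝ) ^ (i : ℕ) * B' := by
      have he : ∏ k ∈ Finset.Iio i, (lam k - lam i)
          = ∏ k ∈ Finset.Iio i, (-1 : ℝ) * (lam i - lam k) :=
        Finset.prod_congr rfl fun k _ => by ring
      rw [hB', he, Finset.prod_mul_distrib, Finset.prod_const, Fin.card_Iio]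
    have h2 : ((-1 : ℝ) ^ (i : ℕ)) ^ 2 = 1 := by
      rw [← pow_mul, mul_comm, pow_mul]; norm_num
    have hval : (-1 : ℝ) ^ (i : ℕ) * P (lam i)
        = ((-1 : ℝ) ^ (i : ℕ)) ^ 2 * (ρ * (z i ^ 2 * (A * B'))) := by
      rw [hPlam i, hsplit, Finset.prod_disjUnion, hB]
      ring
    rw [hval, h2, one_mul]
    have hz2 : 0 < z i ^ 2 := lt_of_le_of_ne (sq_nonneg _) (Ne.symm (pow_ne_zero 2 (hz i)))
    exact mul_pos hρ (mul_pos hz2 (mul_pos hApos hB'pos))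
  -- sign of P at T
  have htop : 0 ≤ (-1 : ℝ) ^ (n + 1) * P T := by
    set c : Fin (n + 1) → ℝ := fun i => T - lam i with hc
    have hcpos : ∀ i, 0 < c i := fun i => sub_pos.mpr (hTgt i)
    have hx2 : ((-1 : ℝ) ^ (n + 1)) ^ 2 = 1 := by
      rw [← pow_mul, mul_comm, pow_mul]; norm_num
    have hcardu : (univ : Finset (Fin (n + 1))).card = n + 1 := by
      rw [Finset.card_univ, Fintype.card_fin]
    have h1 : ∏ i, (lam i - T) = (-1 : ℝ) ^ (n + 1) * ∏ i, c i := by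
      have he : ∏ i, (lam i - T) = ∏ i, (-1 : ℝ) * c i :=
        Finset.prod_congr rfl fun k _ => by simp only [hc]; ring
      rw [he, Finset.prod_mul_distrib, Finset.prod_const, hcardu]
    have h1e : ∀ j, ∏ k ∈ univ.erase j, (lam k - T) = (-1 : ℝ) ^ n * ∏ k ∈ univ.erase j, c k := by
      intro j
      have hcard : (univ.erase j).card = n := by
        rw [Finset.card_erase_of_mem (mem_univ j), Finset.card_univ, Fintype.card_fin]
        omega
      have he : ∏ k ∈ univ.erase j, (lam k - T) = ∏ k ∈ univ.erase j, (-1 : ℝ) * c k :=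
        Finset.prod_congr rfl fun k _ => by simp only [hc]; ring
      rw [he, Finset.prod_mul_distrib, Finset.prod_const, hcard]
    have hsgn : (-1 : ℝ) ^ (n + 1) * (-1 : ℝ) ^ n = -1 := by
      rw [← pow_add]
      have h : n + 1 + n = 2 * n + 1 := by ring
      rw [h, pow_succ, pow_mul]
      norm_num
    have hPT : (-1 : ℝ) ^ (n + 1) * P T
        = ∏ i, c i - ρ * ∑ j, z j ^ 2 * ∏ k ∈ univ.erase j, c k := by
      have hsum : ∑ j, z j ^ 2 * ∏ k ∈ univ.erase j, (lam k - T)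
          = (-1 : ℝ) ^ n * ∑ j, z j ^ 2 * ∏ k ∈ univ.erase j, c k := by
        rw [Finset.mul_sum]
        exact Finset.sum_congr rfl fun j _ => by rw [h1e j]; ring
      rw [hP]
      simp only []
      rw [h1, hsum]
      linear_combination (∏ i, c i) * hx2
        + (ρ * ∑ j, z j ^ 2 * ∏ k ∈ univ.erase j, c k) * hsgn
    rw [hPT, sub_nonneg]
    -- ρ * ∑ ... ≤ ∏ c
    set dd : ℝ := ρ * ∑ i, z i ^ 2 with hdd
    have hddpos : 0 < dd := mul_pos hρ hzsq
    have hcj : ∀ j, dd ≤ c j := by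
      intro j
      have : lam j ≤ lam (Fin.last n) := hlam.monotone (Fin.le_last j)
      simp only [hc, hT]
      linarith
    have hprodpos : 0 < ∏ i, c i := Finset.prod_pos fun i _ => hcpos i
    have key : (∑ j, z j ^ 2 * ∏ k ∈ univ.erase j, c k) * dd ≤ (∑ j, z j ^ 2) * ∏ i, c i := by
      rw [Finset.sum_mul, Finset.sum_mul]
      refine Finset.sum_le_sum fun j _ => ?_
      have hpe : 0 < ∏ k ∈ univ.erase j, c k :=
        Finset.prod_pos fun k _ => hcpos k
      have hmpe : c j * ∏ k ∈ univ.erase j, c k = ∏ i, c i :=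
        Finset.mul_prod_erase univ c (mem_univ j)
      have h1 : z j ^ 2 * (∏ k ∈ univ.erase j, c k) * dd
          ≤ z j ^ 2 * (∏ k ∈ univ.erase j, c k) * c j :=
        mul_le_mul_of_nonneg_left (hcj j) (mul_nonneg (sq_nonneg _) hpe.le)
      calc z j ^ 2 * (∏ k ∈ univ.erase j, c k) * dd
          ≤ z j ^ 2 * (∏ k ∈ univ.erase j, c k) * c j := h1
        _ = z j ^ 2 * ∏ i, c i := by rw [← hmpe]; ring
    have : (ρ * ∑ j, z j ^ 2 * ∏ k ∈ univ.erase j, c k) * (∑ i, z i ^ 2)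
        ≤ (∏ i, c i) * (∑ i, z i ^ 2) := by
      calc (ρ * ∑ j, z j ^ 2 * ∏ k ∈ univ.erase j, c k) * (∑ i, z i ^ 2)
          = (∑ j, z j ^ 2 * ∏ k ∈ univ.erase j, c k) * dd := by rw [hdd]; ring
        _ ≤ (∑ j, z j ^ 2) * ∏ i, c i := key
        _ = (∏ i, c i) * (∑ i, z i ^ 2) := by ring
    exact le_of_mul_le_mul_right this hzsq
  -- existence of roots in each interval
  have hroot : ∀ i : Fin (n + 1),
      ∃ t, P t = 0 ∧ lam i < t ∧ t ≤ T ∧ ∀ j, i < j → t < lam j := by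
    intro i
    by_cases hi : i = Fin.last n
    · subst hi
      by_cases hPT : P T = 0
      · exact ⟨T, hPT, hTgt _, le_refl T,
          fun j hj => absurd hj (not_lt.mpr (Fin.le_last j))⟩
      · have hlast : ((Fin.last n : Fin (n + 1)) : ℕ) = n := Fin.val_last n
        have hga : 0 < (-1 : ℝ) ^ n * P (lam (Fin.last n)) := by
          have := hsign (Fin.last n); rwa [hlast] at this
        have hgb : (-1 : ℝ) ^ n * P T < 0 := by
          have h1 : (-1 : ℝ) ^ (n + 1) = (-1 : ℝ) ^ n * (-1) := pow_succ _ _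
          have h2 : 0 ≤ -((-1 : ℝ) ^ n * P T) := by
            have := htop; rw [h1] at this; linarith
          have h3 : (-1 : ℝ) ^ n * P T ≠ 0 := by
            intro h
            have : P T = 0 := by
              rcases mul_eq_zero.mp h with h' | h'
              · exact absurd h' (pow_ne_zero n (by norm_num))
              · exact h'
            exact hPT this
          cases lt_or_eq_of_le (by linarith : (-1 : ℝ) ^ n * P T ≤ 0) with
          | inl h => exact h
          | inr h => exact absurd h h3
        have hcont : ContinuousOn (fun t => (-1 : ℝ) ^ n * P t)
            (Set.Icc (lam (Fin.last n)) T) :=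
          (continuous_const.mul hPc).continuousOn
        have hsub := intermediate_value_Ioo' (le_of_lt (hTgt (Fin.last n))) hcont
        have h0 : (0 : ℝ) ∈ Set.Ioo ((-1 : ℝ) ^ n * P T) ((-1 : ℝ) ^ n * P (lam (Fin.last n))) :=
          ⟨hgb, hga⟩
        obtain ⟨t, ht, hgt⟩ := hsub h0
        have hPt : P t = 0 := by
          rcases mul_eq_zero.mp hgt with h' | h'
          · exact absurd h' (pow_ne_zero n (by norm_num))
          · exact h'
        exact ⟨t, hPt, ht.1, le_of_lt ht.2,
          fun j hj => absurd hj (not_lt.mpr (Fin.le_last j))⟩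
    · -- i < last
      set i' : Fin n := i.castPred hi with hi'
      have hcast : i'.castSucc = i := Fin.castSucc_castPred i hi
      have hvali : ((i'.succ : Fin (n + 1)) : ℕ) = (i : ℕ) + 1 := by
        rw [Fin.val_succ, ← hcast, Fin.coe_castSucc]
      have hab : lam i < lam i'.succ := by
        rw [← hcast]; exact hlam (Fin.castSucc_lt_succ (i := i'))
      have hga : 0 < (-1 : ℝ) ^ (i : ℕ) * P (lam i) := hsign i
      have hgb : (-1 : ℝ) ^ (i : ℕ) * P (lam i'.succ) < 0 := by
        have h1 := hsign i'.succ
        rw [hvali, pow_succ] at h1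
        nlinarith
      have hcont : ContinuousOn (fun t => (-1 : ℝ) ^ (i : ℕ) * P t)
          (Set.Icc (lam i) (lam i'.succ)) :=
        (continuous_const.mul hPc).continuousOn
      have hsub := intermediate_value_Ioo' (le_of_lt hab) hcont
      have h0 : (0 : ℝ) ∈ Set.Ioo ((-1 : ℝ) ^ (i : ℕ) * P (lam i'.succ))
          ((-1 : ℝ) ^ (i : ℕ) * P (lam i)) := ⟨hgb, hga⟩
      obtain ⟨t, ht, hgt⟩ := hsub h0
      have hPt : P t = 0 := by
        rcases mul_eq_zero.mp hgt with h' | h'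
        · exact absurd h' (pow_ne_zero _ (by norm_num))
        · exact h'
      refine ⟨t, hPt, ht.1, ?_, ?_⟩
      · exact le_of_lt (lt_of_lt_of_le ht.2
          (le_of_lt (lt_of_le_of_lt (hlam.monotone (Fin.le_last i'.succ)) (hTgt (Fin.last n)))))
      · intro j hj
        have hle : i'.succ ≤ j := by
          rw [← hcast] at hj
          exact Fin.castSucc_lt_iff_succ_le.mp hj
        exact lt_of_lt_of_le ht.2 (hlam.monotone hle)
  choose r hr1 hr2 hr3 hr4 using hroot
  have hrmono : StrictMono r := fun i j hij => lt_trans (hr4 i j hij) (hr2 j)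
  have hrinj : Function.Injective r := hrmono.injective
  have hex : ∀ i, ∃ j, tlam j = r i := by
    intro i
    have h0 : ∏ j, (tlam j - r i) = 0 := by rw [keyF (r i), hr1 i]
    obtain ⟨j, _, hj⟩ := Finset.prod_eq_zero_iff.mp h0
    exact ⟨j, sub_eq_zero.mp hj⟩
  have hBA : univ.image r ⊆ univ.image tlam := by
    intro x hx
    obtain ⟨i, _, hi⟩ := Finset.mem_image.mp hx
    obtain ⟨j, hj⟩ := hex i
    exact Finset.mem_image.mpr ⟨j, mem_univ j, by rw [hj, hi]⟩
  have hcardB : (univ.image r).card = n + 1 := by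
    rw [Finset.card_image_of_injective _ hrinj, Finset.card_univ, Fintype.card_fin]
  have hcardA : (univ.image tlam).card ≤ n + 1 := by
    calc (univ.image tlam).card ≤ univ.card := Finset.card_image_le
      _ = n + 1 := by rw [Finset.card_univ, Fintype.card_fin]
  have hAB : univ.image r = univ.image tlam :=
    Finset.eq_of_subset_of_card_le hBA (by rw [hcardB]; exact hcardA)
  have htinj : Function.Injective tlam := by
    have hcA : (univ.image tlam).card = (univ : Finset (Fin (n + 1))).card := by
      rw [← hAB, hcardB, Finset.card_univ, Fintype.card_fin]
    have := Finset.card_image_iff.mp hcA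
    rw [Finset.coe_univ] at this
    exact Set.injOn_univ.mp this
  have htsm : StrictMono tlam := htmono.strictMono_of_injective htinj
  have hrange : Set.range tlam = Set.range r := by
    rw [← Set.image_univ, ← Set.image_univ, ← Finset.coe_univ, ← Finset.coe_image,
      ← Finset.coe_image, hAB]
  have htr : tlam = r := by
    haveI : WellFoundedLT (Fin (n + 1)) := inferInstance
    exact (StrictMono.range_inj (β := Fin (n + 1)) (γ := ℝ) htsm hrmono).mp hrange
  refine ⟨fun j => by rw [htr]; exact hr2 j,
    fun i => by rw [htr]; exact hr4 i.castSucc i.succ (Fin.castSucc_lt_succ (i := i)),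
    fun j j' hne h => hne (htinj h),
    fun j i h => ?_,
    by rw [htr]; exact hr3 (Fin.last n)⟩
  have hPr : P (lam i) = 0 := by rw [← h, htr]; exact hr1 j
  have := hsign i
  rw [hPr, mul_zero] at this
  exact lt_irrefl 0 this
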